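/- arXiv:2212.07574 — 2 statements merged into one kernel-verified Lean document; each statement's English description precedes it below -/
import Mathlib

section
/- Let X₊ be an n×ℓ complex matrix whose columns are eigenvectors of a real skew-symmetric matrix A corresponding to eigenvalues iσ₁,…,iσ_ℓ with all σⱼ > 0, i.e., A X₊ = X₊ · (i Σ) where Σ is diagonal with positive entries. Then X₊ᵀ X₊ = 0 (transpose without conjugation). -/
open Matrix

theorem skew_symmetric_eigenvector_matrix_T_orthogonal
    {n ℓ : ℕ} (A : Matrix (Fin n) (Fin n) ℝ) (hA : Aᵀ = -A)
    (σ : Fin ℓ → ℝ) (hσ : ∀ j, 0 < σ j)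
    (X : Matrix (Fin n) (Fin ℓ) ℂ)
    (heig : (A.map (Complex.ofReal ·)) * X =
      Complex.I • (X * (Matrix.diagonal σ).map (Complex.ofReal ·))) :
    Xᵀ * X = 0 := by
  set Ac : Matrix (Fin n) (Fin n) ℂ := A.map (Complex.ofReal ·) with hAc
  have hD : (Matrix.diagonal σ).map (Complex.ofReal ·)
      = Matrix.diagonal (fun j => (σ j : ℂ)) := by
    rw [Matrix.diagonal_map (by simp)]
  set D : Matrix (Fin ℓ) (Fin ℓ) ℂ := Matrix.diagonal (fun j => (σ j : ℂ)) with hDdef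
  rw [hD] at heig
  set M : Matrix (Fin ℓ) (Fin ℓ) ℂ := Xᵀ * X with hM
  have hAcT : Acᵀ = -Ac := by
    ext i j
    simp [hAc, Matrix.transpose_map, Matrix.map_apply]
    have := congrFun (congrFun hA i) j
    simp only [Matrix.transpose_apply, Matrix.neg_apply] at this
    push_cast [this]
    ring
  have h1 : Xᵀ * (Ac * X) = Complex.I • (M * D) := by
    rw [heig, Matrix.mul_smul, ← Matrix.mul_assoc]
  have h2 : Xᵀ * (Ac * X) = (-Complex.I) • (D * M) := by
    have hXA : Xᵀ * Ac = (Acᵀ * X)ᵀ := by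
      rw [Matrix.transpose_mul, Matrix.transpose_transpose]
    have hAX : Acᵀ * X = (-Complex.I) • (X * D) := by
      rw [hAcT, Matrix.neg_mul, heig]
      module
    rw [← Matrix.mul_assoc, hXA, hAX, Matrix.transpose_smul, Matrix.transpose_mul,
      Matrix.smul_mul, Matrix.mul_assoc]
    have hDT : Dᵀ = D := Matrix.diagonal_transpose _
    rw [hDT]
  have key : M * D = -(D * M) := by
    have h3 : Complex.I • (M * D) = (-Complex.I) • (D * M) := h1 ▸ h2
    have := congrArg (fun Z => (-Complex.I) • Z) h3
    simpa [smul_smul, Complex.I_mul_I] using this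
  ext j k
  have hk := congrFun (congrFun key j) k
  rw [hDdef] at hk
  simp only [Matrix.mul_diagonal, Matrix.diagonal_mul, Matrix.neg_apply] at hk
  have hs : ((σ j : ℂ) + (σ k : ℂ)) ≠ 0 := by
    have : (0:ℝ) < σ j + σ k := add_pos (hσ j) (hσ k)
    exact_mod_cast (by exact_mod_cast this.ne' : ((σ j + σ k : ℝ) : ℂ) ≠ 0)
  have hM0 : M j k = 0 := by
    have h : ((σ j : ℂ) + (σ k : ℂ)) * M j k = 0 := by linear_combination hk
    rcases mul_eq_zero.mp h with h' | h'
    · exact absurd h' hs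
    · exact h'
  simpa [hM] using hM0
end

section
/- Let B be a real m×m upper bidiagonal matrix with singular triplet (θ, c, d): B d = θ c and Bᵀ c = θ d with ‖c‖ = ‖d‖ = 1. Let P ∈ ℝ^{n×m}, Q ∈ ℝ^{n×(m+1)} satisfy A Q_m = P B and A P = −Q_m Bᵀ − γ q_{m+1} e_mᵀ, where Q_m denotes the first m columns of Q, q_{m+1} its last column, with Q orthonormal. Set ũ = P c, ṽ = Q_m d. Then ‖A ũ + θ ṽ‖² + ‖A ṽ − θ ũ‖² = γ² |e_mᵀ c|². -/
open Matrix

theorem ritz_residual_norm_formula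
    {n m : ℕ} (A : Matrix (Fin n) (Fin n) ℝ) (hA : Aᵀ = -A)
    (B : Matrix (Fin (m + 1)) (Fin (m + 1)) ℝ)
    (hbidiag : ∀ i j : Fin (m + 1),
      ((j : ℕ) < (i : ℕ) ∨ (i : ℕ) + 1 < (j : ℕ)) → B i j = 0)
    (θ γ : ℝ) (c d : Fin (m + 1) → ℝ)
    (hBd : B *ᵥ d = θ • c) (hBtc : Bᵀ *ᵥ c = θ • d)
    (hc : c ⬝ᵥ c = 1) (hd : d ⬝ᵥ d = 1)
    (P Qm : Matrix (Fin n) (Fin (m + 1)) ℝ) (q : Fin n → ℝ)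
    (hQ : Qmᵀ * Qm = 1) (hq : q ⬝ᵥ q = 1) (hQq : Qmᵀ *ᵥ q = 0)
    (hAQ : A * Qm = P * B)
    (hAP : A * P = -(Qm * Bᵀ) - γ • Matrix.vecMulVec q (Pi.single (Fin.last m) 1)) :
    (∑ i, ((A *ᵥ (P *ᵥ c) + θ • (Qm *ᵥ d)) i) ^ 2) +
      (∑ i, ((A *ᵥ (Qm *ᵥ d) - θ • (P *ᵥ c)) i) ^ 2) =
        γ ^ 2 * (c (Fin.last m)) ^ 2 := by
  have h1 : A *ᵥ (P *ᵥ c) + θ • (Qm *ᵥ d) = (-(γ * c (Fin.last m))) • q := by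
    rw [mulVec_mulVec, hAP]
    have hvv : Matrix.vecMulVec q (Pi.single (Fin.last m) 1) *ᵥ c
        = (c (Fin.last m)) • q := by
      ext i
      simp [Matrix.vecMulVec, Matrix.mulVec, dotProduct,
        Pi.single_apply, Finset.sum_ite_eq', mul_comm, mul_assoc]
    rw [sub_mulVec, neg_mulVec, smul_mulVec, hvv,
      ← Matrix.mulVec_mulVec, hBtc, mulVec_smul]
    ext i
    simp
    ring
  have h2 : A *ᵥ (Qm *ᵥ d) - θ • (P *ᵥ c) = 0 := by
    rw [mulVec_mulVec, hAQ, ← Matrix.mulVec_mulVec, hBd, mulVec_smul]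
    simp
  rw [h1, h2]
  have hq' : ∑ i, q i ^ 2 = 1 := by
    rw [← hq]; simp [dotProduct, sq]
  simp only [Pi.smul_apply, smul_eq_mul, mul_pow, Pi.zero_apply,
    ← Finset.mul_sum, hq', Finset.sum_const_zero]
  simp [mul_pow]
end
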